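/- Let X_1, X_2, X_3, X_4 be subsets of Z_v and let A_1, A_2, A_3, A_4 be the associated ±1-sequences (with (A_j)_i = -1 iff i ∈ X_j). Then (X_1, X_2, X_3, X_4) is a difference family with parameters (v; k_1, k_2, k_3, k_4; λ) where λ = k_1 + k_2 + k_3 + k_4 - v if and only if ∑_{j=1}^{4} paf_{A_j}(s) = 0 for all nonzero s ∈ Z_v. -/
import Mathlib

open Finset

lemma card_filter_prod (v : ℕ) [NeZero v] (X : Finset (ZMod v)) (s : ZMod v) :
    ((X ×ˢ X).filter (fun p => p.1 - p.2 = s)).card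
      = (Finset.univ.filter (fun i : ZMod v => i ∈ X ∧ i + s ∈ X)).card := by
  apply Finset.card_bij (fun p _ => p.2)
  · rintro ⟨a, b⟩ hp
    simp only [Finset.mem_filter, Finset.mem_product] at hp
    obtain ⟨⟨ha, hb⟩, hd⟩ := hp
    simp only [Finset.mem_filter, Finset.mem_univ, true_and]
    refine ⟨hb, ?_⟩
    have : b + s = a := by rw [← hd]; ring
    rwa [this]
  · rintro ⟨a, b⟩ hp ⟨c, d⟩ hq h
    simp only at h
    simp only [Finset.mem_filter, Finset.mem_product] at hp hq
    have : a = c := by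
      have h1 := hp.2
      have h2 := hq.2
      subst h
      have : a - b = c - b := by rw [h1, h2]
      linear_combination this
    simp [h, this]
  · intro b hb
    simp only [Finset.mem_filter, Finset.mem_univ, true_and] at hb
    exact ⟨(b + s, b), by simp [Finset.mem_filter, Finset.mem_product, hb.1, hb.2], rfl⟩

lemma paf_eq (v : ℕ) [NeZero v] (X : Finset (ZMod v)) (s : ZMod v) :
    ∑ i : ZMod v, (if i ∈ X then (-1:ℤ) else 1) * (if i + s ∈ X then (-1:ℤ) else 1)
      = (v : ℤ) - 4 * X.card + 4 * ((X ×ˢ X).filter (fun p => p.1 - p.2 = s)).card := by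
  have key : ∀ i : ZMod v,
      (if i ∈ X then (-1:ℤ) else 1) * (if i + s ∈ X then (-1:ℤ) else 1)
        = 1 - 2 * (if i ∈ X then (1:ℤ) else 0) - 2 * (if i + s ∈ X then (1:ℤ) else 0)
          + 4 * (if i ∈ X ∧ i + s ∈ X then (1:ℤ) else 0) := by
    intro i
    by_cases h1 : i ∈ X <;> by_cases h2 : i + s ∈ X <;> simp [h1, h2]
  rw [Finset.sum_congr rfl (fun i _ => key i)]
  rw [Finset.sum_add_distrib, Finset.sum_sub_distrib, Finset.sum_sub_distrib,
    ← Finset.mul_sum, ← Finset.mul_sum, ← Finset.mul_sum]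
  have h1 : ∑ i : ZMod v, (if i ∈ X then (1:ℤ) else 0) = X.card := by
    simp [Finset.sum_boole, Finset.filter_mem_eq_inter]
  have h2 : ∑ i : ZMod v, (if i + s ∈ X then (1:ℤ) else 0) = X.card := by
    rw [← h1]
    exact Fintype.sum_equiv (Equiv.addRight s) _ _ (fun i => rfl)
  have h3 : ∑ i : ZMod v, (if i ∈ X ∧ i + s ∈ X then (1:ℤ) else 0)
      = ((X ×ˢ X).filter (fun p => p.1 - p.2 = s)).card := by
    rw [card_filter_prod]
    simp [Finset.sum_boole]
  rw [h1, h2, h3]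
  simp [ZMod.card]
  ring

/-- Four subsets of `Z_v` form a difference family with `λ = k₁+k₂+k₃+k₄-v` iff
the periodic autocorrelation functions of their associated `±1`-sequences sum to zero
at every nonzero shift. -/
theorem stmt11 (v : ℕ) [NeZero v] (X : Fin 4 → Finset (ZMod v)) :
    (∀ s : ZMod v, s ≠ 0 →
        (∑ j : Fin 4, (((X j) ×ˢ (X j)).filter (fun p => p.1 - p.2 = s)).card : ℤ) =
          (∑ j : Fin 4, ((X j).card : ℤ)) - v) ↔
      (∀ s : ZMod v, s ≠ 0 →
        ∑ j : Fin 4, ∑ i : ZMod v,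
          (if i ∈ X j then (-1 : ℤ) else 1) * (if i + s ∈ X j then (-1 : ℤ) else 1) = 0) := by
  have key : ∀ s : ZMod v,
      ∑ j : Fin 4, ∑ i : ZMod v,
        (if i ∈ X j then (-1 : ℤ) else 1) * (if i + s ∈ X j then (-1 : ℤ) else 1)
      = 4 * (v : ℤ) - 4 * ∑ j : Fin 4, ((X j).card : ℤ)
        + 4 * ∑ j : Fin 4, ((((X j) ×ˢ (X j)).filter (fun p => p.1 - p.2 = s)).card : ℤ) := by
    intro s
    rw [Finset.sum_congr rfl (fun j _ => paf_eq v (X j) s)]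
    rw [Finset.sum_add_distrib, Finset.sum_sub_distrib, ← Finset.mul_sum, ← Finset.mul_sum]
    simp [Finset.sum_const]
  constructor
  · intro h s hs
    rw [key s, h s hs]
    ring
  · intro h s hs
    have := h s hs
    rw [key s] at this
    linarith
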